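/- Let I be a zero-dimensional ideal of R = ℂ[x₁,…,xₙ] and fix i ∈ {1,…,n}. The set of eigenvalues of the companion endomorphism T_i (multiplication by the class of x_i on the finite-dimensional ℂ-vector space R/I) equals the set {z_i : z ∈ V(I)} of i-th coordinates of points of the zero locus V(I). -/

import Mathlib

set_option maxHeartbeats 1000000

/-- For a zero-dimensional ideal `I` of `ℂ[x₁,…,xₙ]` and each `i`, the set of
eigenvalues of the companion endomorphism `Tᵢ` (multiplication by the class of
`Xᵢ` on `R ⧸ I`) equals the set of `i`-th coordinates of points of the zero
locus `V(I)`. -/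
theorem companion_eigenvalues_eq_coordinates
    (n : ℕ) (I : Ideal (MvPolynomial (Fin n) ℂ))
    (hfd : FiniteDimensional ℂ (MvPolynomial (Fin n) ℂ ⧸ I))
    (i : Fin n) (μ : ℂ) :
    Module.End.HasEigenvalue
        (LinearMap.mulLeft ℂ (Ideal.Quotient.mk I (MvPolynomial.X i))) μ ↔
      ∃ z : Fin n → ℂ,
        (∀ g ∈ I, MvPolynomial.eval z g = 0) ∧ z i = μ := by
  set R := MvPolynomial (Fin n) ℂ
  set Q := R ⧸ I
  set a : Q := Ideal.Quotient.mk I (MvPolynomial.X i) with ha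
  have hsm : ∀ (c : ℂ) (w : Q),
      (Ideal.Quotient.mk I (MvPolynomial.C c)) * w = c • w := by
    intro c w
    obtain ⟨p, rfl⟩ := Ideal.Quotient.mk_surjective w
    rw [← map_mul, ← MvPolynomial.smul_eq_C_mul]
    rfl
  constructor
  · intro h
    obtain ⟨v, hv⟩ := h.exists_hasEigenvector
    have hv0 : v ≠ 0 := hv.right
    have hav : a * v = μ • v := Module.End.mem_eigenspace_iff.mp hv.left
    -- b := class of X i - C μ is a zero divisor, hence a nonunit
    set b : Q := Ideal.Quotient.mk I (MvPolynomial.X i - MvPolynomial.C μ) with hb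
    have hbv : b * v = 0 := by
      rw [hb, map_sub, sub_mul, ← ha, hav, hsm μ v, sub_self]
    have hbnu : ¬ IsUnit b := by
      intro hu
      obtain ⟨c, hc⟩ := isUnit_iff_exists_inv.mp hu
      apply hv0
      calc v = (c * b) * v := by rw [mul_comm c b, hc, one_mul]
        _ = c * (b * v) := by ring
        _ = 0 := by rw [hbv, mul_zero]
    have hspan : Ideal.span {b} ≠ ⊤ := by
      intro htop
      exact hbnu (Ideal.span_singleton_eq_top.mp htop)
    obtain ⟨m, hm, hbm⟩ := Ideal.exists_le_maximal _ hspan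
    have hbmem : b ∈ m := hbm (Ideal.subset_span rfl)
    set M : Ideal R := m.comap (Ideal.Quotient.mk I) with hM
    haveI : M.IsMaximal :=
      Ideal.comap_isMaximal_of_surjective _ Ideal.Quotient.mk_surjective
    obtain ⟨z, hz⟩ := MvPolynomial.isMaximal_iff_eq_vanishingIdeal_singleton.mp ‹M.IsMaximal›
    refine ⟨z, ?_, ?_⟩
    · intro g hg
      have hgM : g ∈ M := by
        show Ideal.Quotient.mk I g ∈ m
        rw [Ideal.Quotient.eq_zero_iff_mem.mpr hg]
        exact m.zero_mem
      rw [hz] at hgM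
      exact (MvPolynomial.mem_vanishingIdeal_singleton_iff z g).mp hgM
    · have hXM : (MvPolynomial.X i - MvPolynomial.C μ : R) ∈ M := hbmem
      rw [hz] at hXM
      have := (MvPolynomial.mem_vanishingIdeal_singleton_iff z _).mp hXM
      simpa [sub_eq_zero] using this
  · rintro ⟨z, hz, rfl⟩
    -- evaluation algebra hom on the quotient
    have hker : ∀ p : R, p ∈ I → MvPolynomial.aeval z p = 0 := by
      intro p hp
      simpa [MvPolynomial.aeval_def] using hz p hp
    set φ : Q →ₐ[ℂ] ℂ := Ideal.Quotient.liftₐ I (MvPolynomial.aeval z) hker with hφ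
    set T : Module.End ℂ Q := LinearMap.mulLeft ℂ a with hT
    set g : Module.End ℂ Q := T - (z i) • (1 : Module.End ℂ Q) with hg
    have hφa : φ a = z i := by
      rw [hφ, ha, Ideal.Quotient.liftₐ_apply]
      simp
    have key : ∀ v : Q, φ (g v) = 0 := by
      intro v
      have : g v = a * v - (z i) • v := by
        simp [hg, hT, LinearMap.mulLeft_apply]
      rw [this, map_sub, map_mul, map_smul, hφa, smul_eq_mul, sub_self]
    have hni : ¬ Function.Injective g := by
      intro hinj
      have hsurj : Function.Surjective g :=
        (LinearMap.injective_iff_surjective).mp hinj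
      obtain ⟨v, hv⟩ := hsurj 1
      have h1 : φ (g v) = 0 := key v
      rw [hv, map_one] at h1
      exact one_ne_zero h1
    have hkerg : LinearMap.ker g ≠ ⊥ := fun hbot =>
      hni (LinearMap.ker_eq_bot.mp hbot)
    obtain ⟨v, hvmem, hv0⟩ := (Submodule.ne_bot_iff _).mp hkerg
    have hgv : g v = 0 := LinearMap.mem_ker.mp hvmem
    apply Module.End.hasEigenvalue_of_hasEigenvector (x := v)
    refine ⟨Module.End.mem_eigenspace_iff.mpr ?_, hv0⟩
    have h2 : T v - (z i) • v = 0 := by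
      have h3 := hgv
      simp only [hg, LinearMap.sub_apply, LinearMap.smul_apply,
        Module.End.one_apply] at h3
      exact h3
    exact sub_eq_zero.mp h2
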